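/- Let R = R(M⃗_1,…,M⃗_s) be an R-cross-section of IS_n and let e be an idempotent of R. Then e is a block idempotent if and only if there do not exist idempotents e_1 ≠ 0 and e_2 ≠ 0 of R such that e_1 ⪯ e, e_2 ⪯ e and e_1 e_2 = 0. -/

import Mathlib

open scoped Classical

/-- `IS n` is the full inverse symmetric semigroup: all partial bijections of `Fin n`;
multiplication is composition of partial maps (maps acting on the right). -/
abbrev IS (n : ℕ) : Type := PEquiv (Fin n) (Fin n)

noncomputable section
namespace ISW

instance {n : ℕ} : Mul (IS n) := ⟨PEquiv.trans⟩
instance {n : ℕ} : One (IS n) := ⟨PEquiv.refl _⟩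

/-- The domain of a partial bijection. -/
def pdom {n : ℕ} (f : IS n) : Set (Fin n) := {x | (f x).isSome}

/-- The range of a partial bijection. -/
def pran {n : ℕ} (f : IS n) : Set (Fin n) := {y | (f.symm y).isSome}

/-- Green's R-relation on a semigroup (with identity): `u R v` iff `uS = vS`. -/
def GreenR {S : Type*} [Mul S] (u v : S) : Prop :=
  {w | ∃ s, w = u * s} = {w | ∃ s, w = v * s}

/-- Green's L-relation on a semigroup (with identity): `u L v` iff `Su = Sv`. -/
def GreenL {S : Type*} [Mul S] (u v : S) : Prop :=
  {w | ∃ s, w = s * u} = {w | ∃ s, w = s * v}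

/-- An R-cross-section: a subsemigroup containing exactly one element of every
Green R-class. -/
def IsRCrossSection {S : Type*} [Mul S] (T : Set S) : Prop :=
  (∀ a ∈ T, ∀ b ∈ T, a * b ∈ T) ∧ ∀ x : S, ∃! t, t ∈ T ∧ GreenR x t

/-- An L-cross-section: a subsemigroup containing exactly one element of every
Green L-class. -/
def IsLCrossSection {S : Type*} [Mul S] (T : Set S) : Prop :=
  (∀ a ∈ T, ∀ b ∈ T, a * b ∈ T) ∧ ∀ x : S, ∃! t, t ∈ T ∧ GreenL x t

/-- `φ` realizes a semigroup isomorphism from `T₁` onto `T₂`. -/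
def IsSemiIso {S₁ S₂ : Type*} [Mul S₁] [Mul S₂] (T₁ : Set S₁) (T₂ : Set S₂)
    (φ : S₁ → S₂) : Prop :=
  Set.BijOn φ T₁ T₂ ∧ ∀ a ∈ T₁, ∀ b ∈ T₁, φ (a * b) = φ a * φ b

/-- The partial wreath product `IS m ≀_p IS n`: pairs `(f, a)` with `a ∈ IS n` and
`f` a partial map from `Fin n` to `IS m` whose domain equals the domain of `a`. -/
structure PW (m n : ℕ) where
  base : IS n
  fib : Fin n → Option (IS m)
  dom_eq : ∀ x, (fib x).isSome ↔ (base x).isSome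

/-- Multiplication of the partial wreath product: `(f,a)·(g,b) = (f g^a, ab)`. -/
instance {m n : ℕ} : Mul (PW m n) where
  mul u v :=
    { base := u.base * v.base
      fib := fun x => Option.map₂ (· * ·) (u.fib x) ((u.base x).bind v.fib)
      dom_eq := by
        intro x
        show _ ↔ (((u.base x).bind v.base)).isSome
        cases h : u.base x with
        | none =>
          have : u.fib x = none := by
            have := (u.dom_eq x)
            simp [h] at this
            simpa using Option.not_isSome_iff_eq_none.mp (by simp [this])
          simp [h, this, Option.map₂]
        | some y =>
          have hf : (u.fib x).isSome := (u.dom_eq x).mpr (by simp [h])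
          obtain ⟨s, hs⟩ := Option.isSome_iff_exists.mp hf
          cases h2 : v.base y with
          | none =>
            have : v.fib y = none := by
              have := (v.dom_eq y)
              simp [h2] at this
              simpa using Option.not_isSome_iff_eq_none.mp (by simp [this])
            simp [h, h2, hs, this, Option.map₂]
          | some z =>
            have hg : (v.fib y).isSome := (v.dom_eq y).mpr (by simp [h2])
            obtain ⟨t, ht⟩ := Option.isSome_iff_exists.mp hg
            simp [h, h2, hs, ht, Option.map₂] }

/-- The identity of the partial wreath product. -/
instance {m n : ℕ} : One (PW m n) where
  one :=
    { base := 1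
      fib := fun _ => some 1
      dom_eq := by intro x; simp; rfl }

/-- `chainFun L j x`: with `L` listing the elements of a block in increasing order and
`0 ≤ j < |L|` (`j` is the 0-based version of the paper's index), this is the value at `x` of
the chain `a_{i,j}`: the partial bijection with domain everything except `L[j]`,
sending `L[l] ↦ L[l+1]` for `l < j` and fixing all other points. -/
def chainFun {n : ℕ} (L : List (Fin n)) (j : ℕ) (x : Fin n) : Option (Fin n) :=
  if x ∈ L then
    if L.idxOf x = j then none
    else if L.idxOf x < j then L[L.idxOf x + 1]?
    else some x
  else some x

/-- The generators `a_{i,j}` attached to an ordered decomposition with blocks `B i`. -/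
def RGens {n s : ℕ} (B : Fin s → List (Fin n)) : Set (IS n) :=
  {a : IS n | ∃ i : Fin s, ∃ j : ℕ, j < (B i).length ∧ ∀ x, a x = chainFun (B i) j x}

/-- `R(M⃗₁, …, M⃗ₛ)`: the subsemigroup of `IS n` generated by the chains `a_{i,j}`
together with the identity map. -/
def RSec {n s : ℕ} (B : Fin s → List (Fin n)) : Set (IS n) :=
  (Subsemigroup.closure (RGens B ∪ {1}) : Subsemigroup (IS n))

/-- A decomposition of `Fin n` into disjoint nonempty blocks, each block equipped with
a linear order, recorded by listing the elements of each block in increasing order. -/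
structure OrderedPartition (n s : ℕ) where
  B : Fin s → List (Fin n)
  nonempty : ∀ i, B i ≠ []
  nodup : ∀ i, (B i).Nodup
  disjoint : ∀ i j, i ≠ j → ∀ x, x ∈ B i → x ∉ B j
  cover : ∀ x, ∃ i, x ∈ B i

/-- The chain `a_{i,j}` of the block listed by `L`, viewed inside `IS(M_i)`, i.e. embedded
into `IS n` as a partial bijection whose domain is contained in the block: it is defined on
`L` minus `L[j]`, sends `L[l] ↦ L[l+1]` for `l < j` and fixes the other points of `L`. -/
def chainFunB {n : ℕ} (L : List (Fin n)) (j : ℕ) (x : Fin n) : Option (Fin n) :=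
  if x ∈ L then
    if L.idxOf x = j then none
    else if L.idxOf x < j then L[L.idxOf x + 1]?
    else some x
  else none

/-- The generators of `R(M⃗)` inside `IS(M)` (embedded in `IS n`), `M` listed by `L`. -/
def BlockGens {n : ℕ} (L : List (Fin n)) : Set (IS n) :=
  {a : IS n | ∃ j : ℕ, j < L.length ∧ ∀ x, a x = chainFunB L j x}

/-- The identity of `IS(M)` (embedded in `IS n`): the identity map of the block listed by `L`. -/
def idOn {n : ℕ} (L : List (Fin n)) : Set (IS n) :=
  {a : IS n | ∀ x, a x = if x ∈ L then some x else none}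

/-- The R-cross-section `R(M⃗)` of `IS(M)`, embedded into `IS n`, for the block listed by `L`. -/
def RSecBlock {n : ℕ} (L : List (Fin n)) : Set (IS n) :=
  (Subsemigroup.closure (BlockGens L ∪ idOn L) : Subsemigroup (IS n))

/-- The wreath product `R_i ≀_p R(M⃗_i)` where `R(M⃗_i) ⊆ IS(M_i)`, `M_i` listed by `L`,
and `R_i = T ⊆ IS m`, realized inside `PW m n` via the natural embedding
`IS m ≀_p IS(M_i) ⊆ IS m ≀_p IS n`. -/
def WBlock (m n : ℕ) (L : List (Fin n)) (T : Set (IS m)) : Set (PW m n) :=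
  {u : PW m n | u.base ∈ RSecBlock L ∧ ∀ x f, u.fib x = some f → f ∈ T}

/-- The element `e' = (0̄, 1)` of `IS m ≀_p IS n`: the second component is the identity of
`IS n` and the first component sends every point to the empty map `0` of `IS m`. -/
def ezero (m n : ℕ) : PW m n where
  base := 1
  fib := fun _ => some ⊥
  dom_eq := by intro x; simp; rfl


/-! ### Auxiliary machinery for the proof of Statement 7 -/

section Aux

variable {n s : ℕ}

lemma mul_apply (a b : IS n) (x : Fin n) : (a * b) x = (a x).bind b := rfl

lemma one_apply' (x : Fin n) : (1 : IS n) x = some x := rfl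

/-- `w` is the partial identity on the set `S`. -/
def IsPid (w : IS n) (S : Set (Fin n)) : Prop :=
  ∀ x, w x = if x ∈ S then some x else none

lemma IsPid.mul {a b : IS n} {S T : Set (Fin n)} (ha : IsPid a S) (hb : IsPid b T) :
    IsPid (a * b) (S ∩ T) := by
  intro x
  by_cases hS : x ∈ S <;> by_cases hT : x ∈ T <;>
    simp [mul_apply, ha x, hb x, Set.mem_inter_iff, hS, hT]

lemma IsPid.ext {a b : IS n} {S T : Set (Fin n)} (ha : IsPid a S) (hb : IsPid b T)
    (h : ∀ x, x ∈ S ↔ x ∈ T) : a = b :=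
  PEquiv.ext fun x => by rw [ha x, hb x, if_congr (h x) rfl rfl]

lemma IsPid.bot : IsPid (⊥ : IS n) ∅ := fun x => by simp [PEquiv.bot_apply]

lemma idem_cases {e : IS n} (hee : e * e = e) (x : Fin n) : e x = none ∨ e x = some x := by
  cases h : e x with
  | none => exact Or.inl rfl
  | some z =>
    right
    have hz : e z = some z := by
      have h2 := congrArg (fun f : IS n => f x) hee
      simp only [mul_apply, h, Option.bind_some] at h2
      exact h2
    have hxz : x = z := PEquiv.inj e (a₁ := x) (a₂ := z) h hz
    rw [hxz]

lemma idem_pid {e : IS n} (hee : e * e = e) : IsPid e {x | e x = some x} := by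
  intro x
  rcases idem_cases hee x with h | h <;> simp [Set.mem_setOf_eq, h]

/-- The chain `a_{i,j}` realized as an actual partial bijection. -/
def chainP (L : List (Fin n)) (j : ℕ) (hj : j < L.length) : IS n :=
  (PEquiv.ofSet {x | x ≠ L[j]}).trans (L.take (j + 1)).formPerm.toPEquiv

lemma mem_take_iff {L : List (Fin n)} (hN : L.Nodup) {x : Fin n} {m : ℕ} (hx : x ∈ L) :
    x ∈ L.take m ↔ L.idxOf x < m := by
  constructor
  · intro h
    obtain ⟨q, hq, hqx⟩ := List.mem_iff_getElem.mp h
    have hqm : q < m := by simp only [List.length_take, lt_min_iff] at hq; exact hq.1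
    rw [List.getElem_take] at hqx
    rw [← hqx, List.Nodup.idxOf_getElem hN]
    exact hqm
  · intro h
    have hxl : L.idxOf x < L.length := List.idxOf_lt_length_iff.mpr hx
    have hlt : L.idxOf x < (L.take m).length := by
      simp only [List.length_take, lt_min_iff]; exact ⟨h, hxl⟩
    have : (L.take m)[L.idxOf x] = x := by
      rw [List.getElem_take]; exact List.getElem_idxOf hxl
    exact this ▸ List.getElem_mem hlt

lemma chainP_apply {L : List (Fin n)} (hN : L.Nodup) {j : ℕ} (hj : j < L.length) (x : Fin n) :
    chainP L j hj x = chainFun L j x := by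
  have hLHS : chainP L j hj x =
      if x ≠ L[j] then some ((L.take (j + 1)).formPerm x) else none := by
    show ((PEquiv.ofSet {x | x ≠ L[j]}) x).bind _ = _
    by_cases h : x ≠ L[j] <;>
      simp [PEquiv.ofSet, h, Equiv.toPEquiv]
  rw [hLHS]
  by_cases hxL : x ∈ L
  · have hp : L.idxOf x < L.length := List.idxOf_lt_length_iff.mpr hxL
    have hxp : L[L.idxOf x] = x := List.getElem_idxOf hp
    have hlt : (L.take (j + 1)).length = j + 1 := by
      simp only [List.length_take]; omega
    rcases lt_trichotomy (L.idxOf x) j with hpj | hpj | hpj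
    · have hxm : x ∈ L.take (j + 1) := (mem_take_iff hN hxL).mpr (by omega)
      have hne : x ≠ L[j] := by
        intro hc
        rw [hc, List.Nodup.idxOf_getElem hN] at hpj
        omega
      have hpt : L.idxOf x < (L.take (j + 1)).length := by omega
      have hxpt : (L.take (j + 1))[L.idxOf x] = x := by
        rw [List.getElem_take]; exact hxp
      have hform : (L.take (j + 1)).formPerm x = L[L.idxOf x + 1] := by
        have h1 := List.formPerm_apply_getElem (L.take (j + 1))
          (hN.sublist (List.take_sublist _ _)) (L.idxOf x) hpt
        rw [hxpt] at h1
        rw [h1]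
        have hmod : (L.idxOf x + 1) % (L.take (j + 1)).length = L.idxOf x + 1 := by
          rw [hlt]; exact Nat.mod_eq_of_lt (by omega)
        simp only [hmod, List.getElem_take]
      rw [if_pos hne, hform]
      unfold chainFun
      rw [if_pos hxL, if_neg (by omega), if_pos hpj, List.getElem?_eq_getElem (by omega)]
    · have heq : x = L[j] := by subst hpj; exact hxp.symm
      rw [if_neg (by simpa using heq)]
      unfold chainFun
      rw [if_pos hxL, if_pos hpj]
    · have hne : x ≠ L[j] := by
        intro hc
        rw [hc, List.Nodup.idxOf_getElem hN] at hpj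
        omega
      have hxm : x ∉ L.take (j + 1) := by
        rw [mem_take_iff hN hxL]; omega
      rw [if_pos hne, List.formPerm_apply_of_notMem hxm]
      unfold chainFun
      rw [if_pos hxL, if_neg (by omega), if_neg (by omega)]
  · have hne : x ≠ L[j] := fun hc => hxL (hc ▸ List.getElem_mem hj)
    have hxm : x ∉ L.take (j + 1) := fun hc => hxL (List.take_subset _ _ hc)
    rw [if_pos hne, List.formPerm_apply_of_notMem hxm]
    unfold chainFun
    rw [if_neg hxL]

lemma mem_RSec_one (B : Fin s → List (Fin n)) : (1 : IS n) ∈ RSec B :=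
  Subsemigroup.subset_closure (Or.inr rfl)

lemma mem_RSec_mul {B : Fin s → List (Fin n)} {a b : IS n}
    (ha : a ∈ RSec B) (hb : b ∈ RSec B) : a * b ∈ RSec B :=
  Subsemigroup.mul_mem _ ha hb

lemma chainP_mem (P : OrderedPartition n s) (i : Fin s) {j : ℕ} (hj : j < (P.B i).length) :
    chainP (P.B i) j hj ∈ RSec P.B :=
  Subsemigroup.subset_closure (Or.inl ⟨i, j, hj, fun x => chainP_apply (P.nodup i) hj x⟩)

lemma kill_take (P : OrderedPartition n s) (i : Fin s) :
    ∀ t, t ≤ (P.B i).length → ∃ w ∈ RSec P.B, IsPid w {x | x ∉ (P.B i).take t} := by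
  intro t
  induction t with
  | zero => exact fun _ => ⟨1, mem_RSec_one _, fun x => by simp [one_apply']⟩
  | succ t ih =>
    intro ht
    obtain ⟨w, hwR, hw⟩ := ih (by omega)
    have hjt : t < (P.B i).length := by omega
    refine ⟨w * chainP (P.B i) t hjt, mem_RSec_mul hwR (chainP_mem P i hjt), ?_⟩
    intro x
    have hN := P.nodup i
    rw [mul_apply, hw x]
    by_cases h1 : x ∈ (P.B i).take t
    · have h2 : x ∈ (P.B i).take (t + 1) := by
        have hxL : x ∈ P.B i := List.take_subset _ _ h1
        rw [mem_take_iff hN hxL] at h1 ⊢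
        omega
      simp [h1, h2]
    · rw [if_pos (by simpa using h1), Option.bind_some, chainP_apply hN]
      by_cases hxL : x ∈ P.B i
      · have hidx : ¬ (P.B i).idxOf x < t := fun h => h1 ((mem_take_iff hN hxL).mpr h)
        by_cases heq : (P.B i).idxOf x = t
        · have hmem : x ∈ (P.B i).take (t + 1) := (mem_take_iff hN hxL).mpr (by omega)
          unfold chainFun
          rw [if_pos hxL, if_pos heq, if_neg (by simpa using hmem)]
        · have hmem : x ∉ (P.B i).take (t + 1) := by
            rw [mem_take_iff hN hxL]; omega
          unfold chainFun
          rw [if_pos hxL, if_neg heq, if_neg (by omega), if_pos (by simpa using hmem)]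
      · have hmem : x ∉ (P.B i).take (t + 1) := fun h => hxL (List.take_subset _ _ h)
        unfold chainFun
        rw [if_neg hxL, if_pos (by simpa using hmem)]

lemma kill_block (P : OrderedPartition n s) (i : Fin s) :
    ∃ w ∈ RSec P.B, IsPid w {x | x ∉ P.B i} := by
  obtain ⟨w, hwR, hw⟩ := kill_take P i (P.B i).length le_rfl
  refine ⟨w, hwR, ?_⟩
  simpa only [List.take_length] using hw

lemma kill_list (P : OrderedPartition n s) :
    ∀ l : List (Fin s), ∃ w ∈ RSec P.B, IsPid w {x | ∀ i ∈ l, x ∉ P.B i}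
  | [] => ⟨1, mem_RSec_one _, fun x => by simp [one_apply']⟩
  | (i :: l) => by
    obtain ⟨w₁, h1R, h1⟩ := kill_block P i
    obtain ⟨w₂, h2R, h2⟩ := kill_list P l
    refine ⟨w₁ * w₂, mem_RSec_mul h1R h2R, ?_⟩
    intro x
    have hiff : (x ∈ ({x | x ∉ P.B i} ∩ {x | ∀ j ∈ l, x ∉ P.B j})) ↔
        (∀ j ∈ (i :: l), x ∉ P.B j) := by
      simp [Set.mem_inter_iff, List.forall_mem_cons]
    rw [(h1.mul h2) x]
    by_cases hx : ∀ j ∈ (i :: l), x ∉ P.B j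
    · rw [if_pos (hiff.mpr hx),
        if_pos (show x ∈ {x | ∀ j ∈ (i :: l), x ∉ P.B j} from hx)]
    · rw [if_neg (fun hc => hx (hiff.mp hc)),
        if_neg (show x ∉ {x | ∀ j ∈ (i :: l), x ∉ P.B j} from hx)]

/-- The order/fixing invariant satisfied by every element of the cross-section. -/
def Jinv (B : Fin s → List (Fin n)) (w : IS n) : Prop :=
  ∀ i : Fin s, ∀ x ∈ B i,
    (∀ z, w x = some z → z ∈ B i ∧ (B i).idxOf x ≤ (B i).idxOf z) ∧
    (w x = some x → ∀ y ∈ B i, (B i).idxOf x ≤ (B i).idxOf y → w y = some y)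

lemma Jinv_one (B : Fin s → List (Fin n)) : Jinv B (1 : IS n) := by
  intro i x hx
  constructor
  · intro z hz
    rw [one_apply'] at hz
    cases hz
    exact ⟨hx, le_rfl⟩
  · intro _ y _ _
    exact one_apply' y

lemma Jinv_mul {B : Fin s → List (Fin n)} {u v : IS n} (hu : Jinv B u) (hv : Jinv B v) :
    Jinv B (u * v) := by
  intro i x hx
  constructor
  · intro z hz
    rw [mul_apply] at hz
    obtain ⟨z', hz', hz2⟩ := Option.bind_eq_some_iff.mp hz
    obtain ⟨hz'B, hle⟩ := (hu i x hx).1 z' hz'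
    obtain ⟨hzB, hle2⟩ := (hv i z' hz'B).1 z hz2
    exact ⟨hzB, le_trans hle hle2⟩
  · intro hxx y hy hle
    rw [mul_apply] at hxx
    obtain ⟨z, hz1, hz2⟩ := Option.bind_eq_some_iff.mp hxx
    obtain ⟨hzB, hle1⟩ := (hu i x hx).1 z hz1
    obtain ⟨_, hle2⟩ := (hv i z hzB).1 x hz2
    have hzx : z = x := by
      have hidx : (B i).idxOf z = (B i).idxOf x := le_antisymm hle2 hle1
      have h1 : (B i)[(B i).idxOf z]'(List.idxOf_lt_length_iff.mpr hzB) = z :=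
        List.getElem_idxOf _
      have h2 : (B i)[(B i).idxOf x]'(List.idxOf_lt_length_iff.mpr hx) = x :=
        List.getElem_idxOf _
      rw [← h1, ← h2]
      congr 1
    subst hzx
    have hux := (hu i z hx).2 hz1 y hy hle
    have hvx := (hv i z hx).2 hz2 y hy hle
    rw [mul_apply, hux, Option.bind_some, hvx]

lemma Jinv_gen_main {L : List (Fin n)} (hN : L.Nodup) {j : ℕ} (hj : j < L.length)
    {a : IS n} (ha : ∀ x, a x = chainFun L j x) (x : Fin n) (hxL : x ∈ L) :
    (∀ z, a x = some z → z ∈ L ∧ L.idxOf x ≤ L.idxOf z) ∧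
    (a x = some x → ∀ y ∈ L, L.idxOf x ≤ L.idxOf y → a y = some y) := by
  have hp : L.idxOf x < L.length := List.idxOf_lt_length_iff.mpr hxL
  have hxp : L[L.idxOf x] = x := List.getElem_idxOf hp
  rcases lt_trichotomy (L.idxOf x) j with hpj | hpj | hpj
  · have hax : a x = some (L[L.idxOf x + 1]'(by omega)) := by
      rw [ha x]
      unfold chainFun
      rw [if_pos hxL, if_neg (by omega), if_pos hpj, List.getElem?_eq_getElem (by omega)]
    constructor
    · intro z hz
      rw [hax] at hz
      cases hz
      constructor
      · exact List.getElem_mem _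
      · rw [List.Nodup.idxOf_getElem hN]
        omega
    · intro hxx
      rw [hax] at hxx
      have hxx' := Option.some.inj hxx
      have h2 := List.Nodup.idxOf_getElem hN (L.idxOf x + 1) (by omega)
      rw [hxx'] at h2
      omega
  · have hax : a x = none := by
      rw [ha x]
      unfold chainFun
      rw [if_pos hxL, if_pos hpj]
    constructor
    · intro z hz; rw [hax] at hz; cases hz
    · intro hxx; rw [hax] at hxx; cases hxx
  · have hax : a x = some x := by
      rw [ha x]
      unfold chainFun
      rw [if_pos hxL, if_neg (by omega), if_neg (by omega)]
    constructor
    · intro z hz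
      rw [hax] at hz
      cases hz
      exact ⟨hxL, le_rfl⟩
    · intro _ y hy hle
      have hyL : y ∈ L := hy
      rw [ha y]
      unfold chainFun
      rw [if_pos hyL, if_neg (by omega), if_neg (by omega)]

lemma Jinv_gen (P : OrderedPartition n s) {a : IS n} {i : Fin s} {j : ℕ}
    (hj : j < (P.B i).length) (ha : ∀ x, a x = chainFun (P.B i) j x) : Jinv P.B a := by
  intro i' x hx
  by_cases hxL : x ∈ P.B i
  · have hii : i' = i := by
      by_contra hne
      exact P.disjoint i i' (fun h => hne h.symm) x hxL hx
    rw [hii]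
    exact Jinv_gen_main (P.nodup i) hj ha x hxL
  · have hne : ∀ y ∈ P.B i', y ∉ P.B i := by
      intro y hy hyL
      by_cases hii : i' = i
      · exact hxL (hii ▸ hx)
      · exact P.disjoint i' i hii y hy hyL
    have hax : a x = some x := by
      rw [ha x]
      unfold chainFun
      rw [if_neg (hne x hx)]
    constructor
    · intro z hz
      rw [hax] at hz
      cases hz
      exact ⟨hx, le_rfl⟩
    · intro _ y hy _
      rw [ha y]
      unfold chainFun
      rw [if_neg (hne y hy)]

lemma Jinv_closure (P : OrderedPartition n s) {w : IS n} (hw : w ∈ RSec P.B) :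
    Jinv P.B w := by
  have hw' : w ∈ Subsemigroup.closure (RGens P.B ∪ {1}) := hw
  refine Subsemigroup.closure_induction (p := fun x _ => Jinv P.B x) ?_
    (fun x y _ _ hx hy => Jinv_mul hx hy) hw'
  rintro a (⟨i, j, hj, ha⟩ | ha)
  · exact Jinv_gen P hj ha
  · rw [Set.mem_singleton_iff] at ha
    subst ha
    exact Jinv_one P.B

end Aux

/-- an idempotent `e` of an R-cross-section `R = R(M⃗₁, …, M⃗ₛ)` of `IS n`
is a block idempotent (`dom e ⊆ M_i` for some `i`) iff there are no idempotents
`e₁ ≠ 0 ≠ e₂` of `R` with `e₁ ⪯ e`, `e₂ ⪯ e` and `e₁e₂ = 0`. -/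
theorem block_idempotent_iff (n s : ℕ) (hn : 0 < n) (P : OrderedPartition n s)
    (e : IS n) (he : e ∈ RSec P.B) (hee : e * e = e) :
    (∃ i : Fin s, ∀ x, (e x).isSome → x ∈ P.B i) ↔
      ¬∃ e₁ e₂ : IS n, e₁ ∈ RSec P.B ∧ e₂ ∈ RSec P.B ∧
        e₁ * e₁ = e₁ ∧ e₂ * e₂ = e₂ ∧ e₁ ≠ ⊥ ∧ e₂ ≠ ⊥ ∧
        (e₁ * e = e₁ ∧ e * e₁ = e₁) ∧ (e₂ * e = e₂ ∧ e * e₂ = e₂) ∧ e₁ * e₂ = ⊥ := by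
  constructor
  · rintro ⟨i, hi⟩ ⟨e₁, e₂, h1R, h2R, h1i, h2i, h10, h20, ⟨h1e, _⟩, ⟨h2e, _⟩, h12⟩
    set L := P.B i with hLdef
    have hlen : 0 < L.length := List.length_pos_iff.mpr (P.nonempty i)
    have last_mem : L[L.length - 1]'(by omega) ∈ L := List.getElem_mem _
    have key : ∀ f : IS n, f ∈ RSec P.B → f * f = f → f * e = f → f ≠ ⊥ →
        f (L[L.length - 1]'(by omega)) = some (L[L.length - 1]'(by omega)) := by
      intro f hfR hfi hfe hf0
      have hex : ∃ x, f x = some x := by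
        by_contra hc
        push_neg at hc
        apply hf0
        apply PEquiv.ext
        intro x
        rcases idem_cases hfi x with h | h
        · rw [h, PEquiv.bot_apply]
        · exact absurd h (hc x)
      obtain ⟨x, hxf⟩ := hex
      have hxe : e x = some x := by
        have h2 := congrArg (fun g : IS n => g x) hfe
        simp only [mul_apply, hxf, Option.bind_some] at h2
        exact h2
      have hxB : x ∈ L := hi x (by rw [hxe]; rfl)
      have hidx : L.idxOf x ≤ L.idxOf (L[L.length - 1]'(by omega)) := by
        rw [List.Nodup.idxOf_getElem (P.nodup i)]
        have := List.idxOf_lt_length_iff.mpr hxB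
        omega
      exact ((Jinv_closure P hfR) i x hxB).2 hxf _ last_mem hidx
    have k1 := key e₁ h1R h1i h1e h10
    have k2 := key e₂ h2R h2i h2e h20
    have hcontra : (e₁ * e₂) (L[L.length - 1]'(by omega)) =
        some (L[L.length - 1]'(by omega)) := by
      rw [mul_apply, k1, Option.bind_some, k2]
    rw [h12, PEquiv.bot_apply] at hcontra
    exact Option.some_ne_none _ hcontra.symm
  · intro h
    by_contra hno
    push_neg at hno
    obtain ⟨i0, _⟩ := P.cover ⟨0, hn⟩
    obtain ⟨x₁, hx₁s, _⟩ := hno i0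
    obtain ⟨i₁, hx₁B⟩ := P.cover x₁
    obtain ⟨x₀, hx₀s, hx₀n⟩ := hno i₁
    have pe : IsPid e {x | e x = some x} := idem_pid hee
    have hx1e : e x₁ = some x₁ := by
      rcases idem_cases hee x₁ with hc | hc
      · rw [hc] at hx₁s; exact absurd hx₁s (by simp)
      · exact hc
    have hx0e : e x₀ = some x₀ := by
      rcases idem_cases hee x₀ with hc | hc
      · rw [hc] at hx₀s; exact absurd hx₀s (by simp)
      · exact hc
    obtain ⟨w₁, hw₁R, hw₁⟩ := kill_block P i₁
    set l : List (Fin s) := (List.finRange s).filter (fun i => decide (i ≠ i₁)) with hldef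
    obtain ⟨w₂, hw₂R, hw₂⟩ := kill_list P l
    have hmeml : ∀ i : Fin s, i ∈ l ↔ i ≠ i₁ := by
      intro i
      simp [hldef, List.mem_filter, List.mem_finRange]
    set E : Set (Fin n) := {x | e x = some x} with hEdef
    set S₁ : Set (Fin n) := {x | x ∉ P.B i₁} with hS₁def
    set S₂ : Set (Fin n) := {x | ∀ i ∈ l, x ∉ P.B i} with hS₂def
    have p1 : IsPid (e * w₁) (E ∩ S₁) := pe.mul hw₁
    have p2 : IsPid (e * w₂) (E ∩ S₂) := pe.mul hw₂
    have hx₀m : x₀ ∈ E ∩ S₁ := ⟨hx0e, hx₀n⟩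
    have hx₁m : x₁ ∈ E ∩ S₂ := by
      refine ⟨hx1e, ?_⟩
      intro i hil
      exact P.disjoint i₁ i (fun hc => ((hmeml i).mp hil) hc.symm) x₁ hx₁B
    apply h
    refine ⟨e * w₁, e * w₂, mem_RSec_mul he hw₁R, mem_RSec_mul he hw₂R, ?_, ?_, ?_, ?_,
      ⟨?_, ?_⟩, ⟨?_, ?_⟩, ?_⟩
    · exact (p1.mul p1).ext p1 (fun x => by simp only [Set.mem_inter_iff]; tauto)
    · exact (p2.mul p2).ext p2 (fun x => by simp only [Set.mem_inter_iff]; tauto)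
    · intro hb
      have hx : (e * w₁) x₀ = some x₀ := by rw [p1 x₀, if_pos hx₀m]
      rw [hb, PEquiv.bot_apply] at hx
      exact Option.some_ne_none _ hx.symm
    · intro hb
      have hx : (e * w₂) x₁ = some x₁ := by rw [p2 x₁, if_pos hx₁m]
      rw [hb, PEquiv.bot_apply] at hx
      exact Option.some_ne_none _ hx.symm
    · exact (p1.mul pe).ext p1 (fun x => by simp only [Set.mem_inter_iff]; tauto)
    · exact (pe.mul p1).ext p1 (fun x => by simp only [Set.mem_inter_iff]; tauto)
    · exact (p2.mul pe).ext p2 (fun x => by simp only [Set.mem_inter_iff]; tauto)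
    · exact (pe.mul p2).ext p2 (fun x => by simp only [Set.mem_inter_iff]; tauto)
    · refine (p1.mul p2).ext IsPid.bot (fun x => ?_)
      simp only [Set.mem_empty_iff_false, iff_false]
      rintro ⟨⟨-, hxS₁⟩, -, hxS₂⟩
      obtain ⟨i, hxBi⟩ := P.cover x
      by_cases hii : i = i₁
      · exact hxS₁ (hii ▸ hxBi)
      · exact hxS₂ i ((hmeml i).mpr hii) hxBi

end ISW
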